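/- (Proposition 2) The parity-seeking deletion algorithm for 2-3 red-black trees terminates and is correct: for every 2-3 red-black tree T and every key k occurring in T, the algorithm produces a valid 2-3 red-black tree whose inorder traversal is the inorder traversal of T with k removed. -/

import Mathlib

inductive Color where
  | red : Color
  | black : Color
deriving DecidableEq

inductive RBTree (α : Type) where
  | nil : RBTree α
  | node : Color → RBTree α → α → RBTree α → RBTree α

namespace RBTree

variable {α : Type}

/-- The color of a tree's root; external (nil) positions count as black. -/
def color : RBTree α → Color
  | .nil => Color.black
  | .node c _ _ _ => c

/-- Inorder traversal of the keys. -/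
def inorder : RBTree α → List α
  | .nil => []
  | .node _ l k r => inorder l ++ k :: inorder r

/-- `BH t n`: every path from the root of `t` to an external node contains
exactly `n` black nodes (property (3)). -/
inductive BH : RBTree α → ℕ → Prop where
  | nil : BH RBTree.nil 0
  | red {l r : RBTree α} {k : α} {n : ℕ} :
      BH l n → BH r n → BH (RBTree.node Color.red l k r) n
  | black {l r : RBTree α} {k : α} {n : ℕ} :
      BH l n → BH r n → BH (RBTree.node Color.black l k r) (n + 1)

/-- Property (2): every red node has black children (equivalently, a red node
never has a red parent). -/
def NoRedRed : RBTree α → Prop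
  | .nil => True
  | .node c l _ r =>
      (c = Color.red → color l = Color.black ∧ color r = Color.black) ∧
      NoRedRed l ∧ NoRedRed r

/-- The 2-3 condition: no node has two red children. -/
def No2Red : RBTree α → Prop
  | .nil => True
  | .node _ l _ r =>
      ¬(color l = Color.red ∧ color r = Color.red) ∧ No2Red l ∧ No2Red r

/-- A red-black tree: black root, no red-red violation, uniform black counts. -/
def IsRB (t : RBTree α) : Prop :=
  color t = Color.black ∧ NoRedRed t ∧ ∃ n, BH t n

/-- A 2-3 red-black tree: a red-black tree where no node has two red children. -/
def Is23RB (t : RBTree α) : Prop := IsRB t ∧ No2Red t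

/-- Recolor the root black. -/
def setBlack : RBTree α → RBTree α
  | .nil => .nil
  | .node _ l k r => .node Color.black l k r

/-- `Occurs s t`: `s` occurs as a subtree of `t`. -/
inductive Occurs : RBTree α → RBTree α → Prop where
  | refl (t : RBTree α) : Occurs t t
  | left {s l : RBTree α} (c : Color) (k : α) (r : RBTree α) :
      Occurs s l → Occurs s (RBTree.node c l k r)
  | right {s r : RBTree α} (c : Color) (k : α) (l : RBTree α) :
      Occurs s r → Occurs s (RBTree.node c l k r)

/-- `Replace s s' t t'`: `t'` is obtained from `t` by replacing one
occurrence of the subtree `s` by `s'`. -/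
inductive Replace (s s' : RBTree α) : RBTree α → RBTree α → Prop where
  | here : Replace s s' s s'
  | left {l l' : RBTree α} (c : Color) (k : α) (r : RBTree α) :
      Replace s s' l l' → Replace s s' (RBTree.node c l k r) (RBTree.node c l' k r)
  | right {r r' : RBTree α} (c : Color) (k : α) (l : RBTree α) :
      Replace s s' r r' → Replace s s' (RBTree.node c l k r) (RBTree.node c l k r')

/-- The list of black-node counts along all root-to-external paths
(in left-to-right order of the external nodes). -/
def bpaths : RBTree α → List ℕ
  | .nil => [0]
  | .node c l _ r =>
      (bpaths l ++ bpaths r).map (fun m => m + if c = Color.black then 1 else 0)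

/-- Height: the maximum number of edges on a path from the root to an external node. -/
def height : RBTree α → ℕ
  | .nil => 0
  | .node _ l _ r => max (height l) (height r) + 1

/-- Number of internal nodes. -/
def size : RBTree α → ℕ
  | .nil => 0
  | .node _ l _ r => size l + size r + 1

end RBTree

namespace RBTree

variable {α : Type}

/-- Parity-seeking rebalancing when the *left* child `x` of a node (of color
`c`, key `k`, right child = sibling `y`) is the root of a deficient subtree.
Returns the rebuilt subtree and a flag telling whether it is still deficient.
  * Case III: `y` red — rotate the parent toward `x` (former parent becomes
    red, `y` black) so that `x`'s new sibling is black, and continue there.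
  * Case II, red nephew — a single/double rotation with recoloring resolves
    the deficiency entirely.
  * Case II, both nephews black — recolor `y` red; if the parent was red it is
    recolored black (Case I) and the deficiency is resolved, otherwise the
    deficiency is lifted to the parent. -/
def delFixL : Color → RBTree α → α → RBTree α → RBTree α × Bool
  | _, x, k, RBTree.node Color.red yl yk yr =>
      let p := delFixL Color.red x k yl
      (RBTree.node Color.black p.1 yk yr, p.2)
  | c, x, k, RBTree.node Color.black yl yk (RBTree.node Color.red a wk b) =>
      (RBTree.node c (RBTree.node Color.black x k yl) yk
        (RBTree.node Color.black a wk b), false)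
  | c, x, k, RBTree.node Color.black (RBTree.node Color.red a wk b) yk yr =>
      (RBTree.node c (RBTree.node Color.black x k a) wk
        (RBTree.node Color.black b yk yr), false)
  | c, x, k, RBTree.node Color.black yl yk yr =>
      (RBTree.node Color.black x k (RBTree.node Color.red yl yk yr),
        decide (c = Color.black))
  | c, x, k, RBTree.nil => (RBTree.node c x k RBTree.nil, false)

/-- Mirror image of `delFixL`: the *right* child `x` is deficient, the sibling
`y` is the left child. -/
def delFixR : Color → RBTree α → α → RBTree α → RBTree α × Bool
  | _, RBTree.node Color.red yl yk yr, k, x =>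
      let p := delFixR Color.red yr k x
      (RBTree.node Color.black yl yk p.1, p.2)
  | c, RBTree.node Color.black (RBTree.node Color.red a wk b) yk yr, k, x =>
      (RBTree.node c (RBTree.node Color.black a wk b) yk
        (RBTree.node Color.black yr k x), false)
  | c, RBTree.node Color.black yl yk (RBTree.node Color.red a wk b), k, x =>
      (RBTree.node c (RBTree.node Color.black yl yk a) wk
        (RBTree.node Color.black b k x), false)
  | c, RBTree.node Color.black yl yk yr, k, x =>
      (RBTree.node Color.black (RBTree.node Color.red yl yk yr) k x,
        decide (c = Color.black))
  | c, RBTree.nil, k, x => (RBTree.node c RBTree.nil k x, false)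

/-- Delete the minimum of the nonempty tree `node c l x r`; returns the
minimum key, the remaining tree, and a deficiency flag. -/
def delMin : Color → RBTree α → α → RBTree α → α × RBTree α × Bool
  | c, RBTree.nil, x, r =>
      match r with
      | RBTree.nil => (x, RBTree.nil, decide (c = Color.black))
      | r => (x, setBlack r, false)
  | c, RBTree.node cl ll lx lr, x, r =>
      let p := delMin cl ll lx lr
      if p.2.2 then
        let q := delFixL c p.2.1 x r
        (p.1, q.1, q.2)
      else (p.1, RBTree.node c p.2.1 x r, false)

/-- The parity-seeking deletion algorithm: reduce the deletion to a leaf or a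
degree-1 node, then rebalance bottom-up with the parity-seeking rules.
Returns the resulting tree and a deficiency flag. -/
def delAux [LinearOrder α] (k : α) : RBTree α → RBTree α × Bool
  | .nil => (RBTree.nil, false)
  | .node c l x r =>
      if k < x then
        let p := delAux k l
        if p.2 then delFixL c p.1 x r else (RBTree.node c p.1 x r, false)
      else if x < k then
        let p := delAux k r
        if p.2 then delFixR c l x p.1 else (RBTree.node c l x p.1, false)
      else
        match l, r with
        | RBTree.nil, RBTree.nil => (RBTree.nil, decide (c = Color.black))
        | RBTree.nil, r => (setBlack r, false)
        | l, RBTree.nil => (setBlack l, false)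
        | l, RBTree.node rc rl rx rr =>
            let p := delMin rc rl rx rr
            if p.2.2 then delFixR c l p.1 p.2.1
            else (RBTree.node c l p.1 p.2.1, false)

/-- Deletion of the key `k` from a 2-3 red-black tree. -/
def delete [LinearOrder α] (k : α) (t : RBTree α) : RBTree α :=
  (delAux k t).1

end RBTree

namespace RBTree

variable {α : Type}

def cv : Color → ℕ
  | Color.red => 0
  | Color.black => 1

@[simp] lemma cv_red : cv Color.red = 0 := rfl
@[simp] lemma cv_black : cv Color.black = 1 := rfl

lemma bh_node {c : Color} {l r : RBTree α} {k : α} {n : ℕ} (hl : BH l n) (hr : BH r n) :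
    BH (RBTree.node c l k r) (n + cv c) := by
  cases c
  · exact BH.red hl hr
  · exact BH.black hl hr

lemma bh_inv {c : Color} {l r : RBTree α} {k : α} {m : ℕ}
    (h : BH (RBTree.node c l k r) m) : ∃ n, BH l n ∧ BH r n ∧ m = n + cv c := by
  cases h with
  | red hl hr => exact ⟨_, hl, hr, rfl⟩
  | black hl hr => exact ⟨_, hl, hr, rfl⟩

lemma bh_nil_inv {m : ℕ} (h : BH (RBTree.nil : RBTree α) m) : m = 0 := by cases h; rfl

lemma bh_zero_red {c : Color} {l r : RBTree α} {k : α}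
    (h : BH (RBTree.node c l k r) 0) : c = Color.red := by
  cases h; rfl

lemma nrr_inv {c : Color} {l r : RBTree α} {k : α} (h : NoRedRed (RBTree.node c l k r)) :
    (c = Color.red → color l = Color.black ∧ color r = Color.black) ∧
      NoRedRed l ∧ NoRedRed r := h

lemma n2r_inv {c : Color} {l r : RBTree α} {k : α} (h : No2Red (RBTree.node c l k r)) :
    ¬(color l = Color.red ∧ color r = Color.red) ∧ No2Red l ∧ No2Red r := h

lemma nrr_node {c : Color} {l r : RBTree α} {k : α}
    (h : c = Color.red → color l = Color.black ∧ color r = Color.black)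
    (hl : NoRedRed l) (hr : NoRedRed r) : NoRedRed (RBTree.node c l k r) := ⟨h, hl, hr⟩

lemma n2r_node {c : Color} {l r : RBTree α} {k : α}
    (h : ¬(color l = Color.red ∧ color r = Color.red))
    (hl : No2Red l) (hr : No2Red r) : No2Red (RBTree.node c l k r) := ⟨h, hl, hr⟩

/-- Spec for the result of a rebalancing step. -/
def FixSpec (c : Color) (n : ℕ) (res : RBTree α × Bool) (io : List α) : Prop :=
  inorder res.1 = io ∧ NoRedRed res.1 ∧ No2Red res.1 ∧
  (if res.2 = true then
      c = Color.black ∧ BH res.1 (n + 1) ∧ color res.1 = Color.black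
    else BH res.1 (n + 1 + cv c) ∧
      (color res.1 = c ∨ color res.1 = Color.black))

lemma fixSpec_false {c : Color} {n : ℕ} {res : RBTree α × Bool} {io : List α}
    (hf : res.2 = false) (hio : inorder res.1 = io)
    (h1 : NoRedRed res.1) (h2 : No2Red res.1)
    (hb : BH res.1 (n + 1 + cv c))
    (hc : color res.1 = c ∨ color res.1 = Color.black) : FixSpec c n res io := by
  refine ⟨hio, h1, h2, ?_⟩
  rw [if_neg (by rw [hf]; simp)]
  exact ⟨hb, hc⟩

lemma fixSpec_true {n : ℕ} {res : RBTree α × Bool} {io : List α}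
    (hf : res.2 = true) (hio : inorder res.1 = io)
    (h1 : NoRedRed res.1) (h2 : No2Red res.1)
    (hb : BH res.1 (n + 1)) (hc : color res.1 = Color.black) :
    FixSpec Color.black n res io := by
  refine ⟨hio, h1, h2, ?_⟩
  rw [if_pos hf]
  exact ⟨rfl, hb, hc⟩

lemma delFixL_spec {c : Color} {x y : RBTree α} {k : α} {n : ℕ}
    (hx : BH x n) (hxc : color x = Color.black) (hx1 : NoRedRed x) (hx2 : No2Red x)
    (hy : BH y (n + 1)) (hy1 : NoRedRed y) (hy2 : No2Red y)
    (hcy : c = Color.red → color y = Color.black) :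
    FixSpec c n (delFixL c x k y) (inorder x ++ k :: inorder y) := by
  induction y generalizing c with
  | nil => exact absurd (bh_nil_inv hy) (by omega)
  | node cy yl yk yr ihl _ =>
    obtain ⟨ny, hyl, hyr, hny⟩ := bh_inv hy
    obtain ⟨hycol, hyl1, hyr1⟩ := nrr_inv hy1
    obtain ⟨hy2c, hyl2, hyr2⟩ := n2r_inv hy2
    cases cy with
    | red =>
      -- Case III: sibling red
      have hc : c = Color.black := by
        cases c
        · exact absurd (hcy rfl) (by simp [color])
        · rfl
      subst hc
      simp only [cv, Nat.add_zero] at hny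
      rw [← hny] at hyl hyr
      obtain ⟨hylb, hyrb⟩ := hycol rfl
      have IH := ihl (c := Color.red) hyl hyl1 hyl2 (fun _ => hylb)
      obtain ⟨io, nrr, n2r, hflag⟩ := IH
      have heq : delFixL Color.black x k (RBTree.node Color.red yl yk yr)
          = (RBTree.node Color.black (delFixL Color.red x k yl).1 yk yr,
             (delFixL Color.red x k yl).2) := by simp [delFixL]
      cases hp : (delFixL Color.red x k yl).2 with
      | true =>
        rw [hp] at hflag
        simp only [if_true] at hflag
        exact absurd hflag.1 (by simp)
      | false =>
        rw [hp] at hflag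
        simp only [Bool.false_eq_true, if_false] at hflag
        obtain ⟨hbh, _⟩ := hflag
        simp only [cv, Nat.add_zero] at hbh
        refine fixSpec_false (by rw [heq, hp]) ?_ ?_ ?_ ?_ ?_ <;> rw [heq]
        · simp [inorder, io, List.append_assoc]
        · exact nrr_node (by simp) nrr hyr1
        · exact n2r_node (by simp [hyrb]) n2r hyr2
        · exact BH.black hbh hyr
        · exact Or.inr rfl
    | black =>
      simp only [cv] at hny
      have hnyn : ny = n := by omega
      rw [hnyn] at hyl hyr
      clear hny hnyn hycol
      rcases yr with _ | ⟨(_ | _), a, wk, b⟩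
      · -- yr = nil
        rcases yl with _ | ⟨(_ | _), a2, wk2, b2⟩
        · -- yl = nil : black nephews
          have heq : delFixL c x k (RBTree.node Color.black RBTree.nil yk RBTree.nil)
              = (RBTree.node Color.black x k (RBTree.node Color.red RBTree.nil yk RBTree.nil),
                 decide (c = Color.black)) := rfl
          cases c with
          | red =>
            refine fixSpec_false (by rw [heq]; rfl) ?_ ?_ ?_ ?_ ?_ <;> rw [heq]
            · simp [inorder]
            · exact nrr_node (by simp) hx1 (nrr_node (by simp [color]) trivial trivial)
            · exact n2r_node (by simp [hxc]) hx2 (n2r_node (by simp [color]) trivial trivial)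
            · simpa using BH.black hx (BH.red hyl hyr)
            · exact Or.inr rfl
          | black =>
            refine fixSpec_true (by rw [heq]; rfl) ?_ ?_ ?_ ?_ ?_ <;> rw [heq]
            · simp [inorder]
            · exact nrr_node (by simp) hx1 (nrr_node (by simp [color]) trivial trivial)
            · exact n2r_node (by simp [hxc]) hx2 (n2r_node (by simp [color]) trivial trivial)
            · exact BH.black hx (BH.red hyl hyr)
            · rfl
        · -- yl = node red a2 wk2 b2, yr = nil : red nephew on the left
          obtain ⟨na, ha2, hb2, hna⟩ := bh_inv hyl
          simp only [cv, Nat.add_zero] at hna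
          rw [← hna] at ha2 hb2
          obtain ⟨hab, ha1, hb1⟩ := nrr_inv hyl1
          obtain ⟨haB, hbB⟩ := hab rfl
          obtain ⟨_, ha2', hb2'⟩ := n2r_inv hyl2
          have heq : delFixL c x k
              (RBTree.node Color.black (RBTree.node Color.red a2 wk2 b2) yk RBTree.nil)
              = (RBTree.node c (RBTree.node Color.black x k a2) wk2
                 (RBTree.node Color.black b2 yk RBTree.nil), false) := rfl
          refine fixSpec_false (by rw [heq]) ?_ ?_ ?_ ?_ ?_ <;> rw [heq]
          · simp [inorder]
          · exact nrr_node (by simp [color]) (nrr_node (by simp) hx1 ha1)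
              (nrr_node (by simp) hb1 trivial)
          · exact n2r_node (by simp [color]) (n2r_node (by simp [hxc]) hx2 ha2')
              (n2r_node (by simp [hbB]) hb2' trivial)
          · exact bh_node (BH.black hx ha2) (BH.black hb2 hyr)
          · exact Or.inl rfl
        · -- yl = node black a2 wk2 b2, yr = nil : black nephews
          have heq : delFixL c x k
              (RBTree.node Color.black (RBTree.node Color.black a2 wk2 b2) yk RBTree.nil)
              = (RBTree.node Color.black x k
                  (RBTree.node Color.red (RBTree.node Color.black a2 wk2 b2) yk RBTree.nil),
                 decide (c = Color.black)) := rfl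
          cases c with
          | red =>
            refine fixSpec_false (by rw [heq]; rfl) ?_ ?_ ?_ ?_ ?_ <;> rw [heq]
            · simp [inorder]
            · exact nrr_node (by simp) hx1 (nrr_node (by simp [color]) hyl1 trivial)
            · exact n2r_node (by simp [hxc]) hx2 (n2r_node (by simp [color]) hyl2 trivial)
            · simpa using BH.black hx (BH.red hyl hyr)
            · exact Or.inr rfl
          | black =>
            refine fixSpec_true (by rw [heq]; rfl) ?_ ?_ ?_ ?_ ?_ <;> rw [heq]
            · simp [inorder]
            · exact nrr_node (by simp) hx1 (nrr_node (by simp [color]) hyl1 trivial)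
            · exact n2r_node (by simp [hxc]) hx2 (n2r_node (by simp [color]) hyl2 trivial)
            · exact BH.black hx (BH.red hyl hyr)
            · rfl
      · -- yr = node red a wk b : red nephew on the right
        obtain ⟨na, ha, hb, hna⟩ := bh_inv hyr
        simp only [cv, Nat.add_zero] at hna
        rw [← hna] at ha hb
        obtain ⟨hab, ha1, hb1⟩ := nrr_inv hyr1
        obtain ⟨haB, hbB⟩ := hab rfl
        obtain ⟨_, ha2', hb2'⟩ := n2r_inv hyr2
        have heq : delFixL c x k
            (RBTree.node Color.black yl yk (RBTree.node Color.red a wk b))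
            = (RBTree.node c (RBTree.node Color.black x k yl) yk
               (RBTree.node Color.black a wk b), false) := by simp [delFixL]
        refine fixSpec_false (by rw [heq]) ?_ ?_ ?_ ?_ ?_ <;> rw [heq]
        · simp [inorder]
        · exact nrr_node (by simp [color]) (nrr_node (by simp) hx1 hyl1)
            (nrr_node (by simp) ha1 hb1)
        · exact n2r_node (by simp [color]) (n2r_node (by simp [hxc]) hx2 hyl2)
            (n2r_node (by simp [haB]) ha2' hb2')
        · exact bh_node (BH.black hx hyl) (BH.black ha hb)
        · exact Or.inl rfl
      · -- yr = node black a wk b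
        rcases yl with _ | ⟨(_ | _), a2, wk2, b2⟩
        · -- yl = nil : black nephews
          have heq : delFixL c x k
              (RBTree.node Color.black RBTree.nil yk (RBTree.node Color.black a wk b))
              = (RBTree.node Color.black x k
                  (RBTree.node Color.red RBTree.nil yk (RBTree.node Color.black a wk b)),
                 decide (c = Color.black)) := rfl
          cases c with
          | red =>
            refine fixSpec_false (by rw [heq]; rfl) ?_ ?_ ?_ ?_ ?_ <;> rw [heq]
            · simp [inorder]
            · exact nrr_node (by simp) hx1 (nrr_node (by simp [color]) trivial hyr1)
            · exact n2r_node (by simp [hxc]) hx2 (n2r_node (by simp [color]) trivial hyr2)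
            · simpa using BH.black hx (BH.red hyl hyr)
            · exact Or.inr rfl
          | black =>
            refine fixSpec_true (by rw [heq]; rfl) ?_ ?_ ?_ ?_ ?_ <;> rw [heq]
            · simp [inorder]
            · exact nrr_node (by simp) hx1 (nrr_node (by simp [color]) trivial hyr1)
            · exact n2r_node (by simp [hxc]) hx2 (n2r_node (by simp [color]) trivial hyr2)
            · exact BH.black hx (BH.red hyl hyr)
            · rfl
        · -- yl = node red a2 wk2 b2 : red nephew on the left
          obtain ⟨na, ha2, hb2, hna⟩ := bh_inv hyl
          simp only [cv, Nat.add_zero] at hna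
          rw [← hna] at ha2 hb2
          obtain ⟨hab, ha1, hb1⟩ := nrr_inv hyl1
          obtain ⟨haB, hbB⟩ := hab rfl
          obtain ⟨_, ha2', hb2'⟩ := n2r_inv hyl2
          have heq : delFixL c x k
              (RBTree.node Color.black (RBTree.node Color.red a2 wk2 b2) yk
                (RBTree.node Color.black a wk b))
              = (RBTree.node c (RBTree.node Color.black x k a2) wk2
                 (RBTree.node Color.black b2 yk (RBTree.node Color.black a wk b)), false) := rfl
          refine fixSpec_false (by rw [heq]) ?_ ?_ ?_ ?_ ?_ <;> rw [heq]
          · simp [inorder]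
          · exact nrr_node (by simp [color]) (nrr_node (by simp) hx1 ha1)
              (nrr_node (by simp) hb1 hyr1)
          · exact n2r_node (by simp [color]) (n2r_node (by simp [hxc]) hx2 ha2')
              (n2r_node (by simp [hbB]) hb2' hyr2)
          · exact bh_node (BH.black hx ha2) (BH.black hb2 hyr)
          · exact Or.inl rfl
        · -- both black nodes : black nephews
          have heq : delFixL c x k
              (RBTree.node Color.black (RBTree.node Color.black a2 wk2 b2) yk
                (RBTree.node Color.black a wk b))
              = (RBTree.node Color.black x k
                  (RBTree.node Color.red (RBTree.node Color.black a2 wk2 b2) yk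
                    (RBTree.node Color.black a wk b)),
                 decide (c = Color.black)) := rfl
          cases c with
          | red =>
            refine fixSpec_false (by rw [heq]; rfl) ?_ ?_ ?_ ?_ ?_ <;> rw [heq]
            · simp [inorder]
            · exact nrr_node (by simp) hx1 (nrr_node (by simp [color]) hyl1 hyr1)
            · exact n2r_node (by simp [hxc]) hx2 (n2r_node (by simp [color]) hyl2 hyr2)
            · simpa using BH.black hx (BH.red hyl hyr)
            · exact Or.inr rfl
          | black =>
            refine fixSpec_true (by rw [heq]; rfl) ?_ ?_ ?_ ?_ ?_ <;> rw [heq]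
            · simp [inorder]
            · exact nrr_node (by simp) hx1 (nrr_node (by simp [color]) hyl1 hyr1)
            · exact n2r_node (by simp [hxc]) hx2 (n2r_node (by simp [color]) hyl2 hyr2)
            · exact BH.black hx (BH.red hyl hyr)
            · rfl

end RBTree

namespace RBTree

variable {α : Type}

lemma delFixR_spec {c : Color} {x y : RBTree α} {k : α} {n : ℕ}
    (hx : BH x n) (hxc : color x = Color.black) (hx1 : NoRedRed x) (hx2 : No2Red x)
    (hy : BH y (n + 1)) (hy1 : NoRedRed y) (hy2 : No2Red y)
    (hcy : c = Color.red → color y = Color.black) :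
    FixSpec c n (delFixR c y k x) (inorder y ++ k :: inorder x) := by
  induction y generalizing c with
  | nil => exact absurd (bh_nil_inv hy) (by omega)
  | node cy yl yk yr _ ihr =>
    obtain ⟨ny, hyl, hyr, hny⟩ := bh_inv hy
    obtain ⟨hycol, hyl1, hyr1⟩ := nrr_inv hy1
    obtain ⟨hy2c, hyl2, hyr2⟩ := n2r_inv hy2
    cases cy with
    | red =>
      -- Case III: sibling red
      have hc : c = Color.black := by
        cases c
        · exact absurd (hcy rfl) (by simp [color])
        · rfl
      subst hc
      simp only [cv, Nat.add_zero] at hny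
      rw [← hny] at hyl hyr
      obtain ⟨hylb, hyrb⟩ := hycol rfl
      have IH := ihr (c := Color.red) hyr hyr1 hy2.2.2 (fun _ => hyrb)
      obtain ⟨io, nrr, n2r, hflag⟩ := IH
      have heq : delFixR Color.black (RBTree.node Color.red yl yk yr) k x
          = (RBTree.node Color.black yl yk (delFixR Color.red yr k x).1,
             (delFixR Color.red yr k x).2) := by simp [delFixR]
      cases hp : (delFixR Color.red yr k x).2 with
      | true =>
        rw [hp] at hflag
        simp only [if_true] at hflag
        exact absurd hflag.1 (by simp)
      | false =>
        rw [hp] at hflag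
        simp only [Bool.false_eq_true, if_false] at hflag
        obtain ⟨hbh, _⟩ := hflag
        simp only [cv, Nat.add_zero] at hbh
        refine fixSpec_false (by rw [heq, hp]) ?_ ?_ ?_ ?_ ?_ <;> rw [heq]
        · simp [inorder, io, List.append_assoc]
        · exact nrr_node (by simp) hyl1 nrr
        · exact n2r_node (by simp [hylb]) hyl2 n2r
        · exact BH.black hyl hbh
        · exact Or.inr rfl
    | black =>
      simp only [cv] at hny
      have hnyn : ny = n := by omega
      rw [hnyn] at hyl hyr
      clear hny hnyn hycol
      rcases yl with _ | ⟨(_ | _), a, wk, b⟩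
      · -- yl = nil
        rcases yr with _ | ⟨(_ | _), a2, wk2, b2⟩
        · -- yr = nil : black nephews
          have heq : delFixR c (RBTree.node Color.black RBTree.nil yk RBTree.nil) k x
              = (RBTree.node Color.black (RBTree.node Color.red RBTree.nil yk RBTree.nil) k x,
                 decide (c = Color.black)) := rfl
          cases c with
          | red =>
            refine fixSpec_false (by rw [heq]; rfl) ?_ ?_ ?_ ?_ ?_ <;> rw [heq]
            · simp [inorder]
            · exact nrr_node (by simp) (nrr_node (by simp [color]) trivial trivial) hx1
            · exact n2r_node (by simp [hxc]) (n2r_node (by simp [color]) trivial trivial) hx2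
            · simpa using BH.black (BH.red hyl hyr) hx
            · exact Or.inr rfl
          | black =>
            refine fixSpec_true (by rw [heq]; rfl) ?_ ?_ ?_ ?_ ?_ <;> rw [heq]
            · simp [inorder]
            · exact nrr_node (by simp) (nrr_node (by simp [color]) trivial trivial) hx1
            · exact n2r_node (by simp [hxc]) (n2r_node (by simp [color]) trivial trivial) hx2
            · exact BH.black (BH.red hyl hyr) hx
            · rfl
        · -- yr = node red a2 wk2 b2, yl = nil : red nephew on the right
          obtain ⟨na, ha2, hb2, hna⟩ := bh_inv hyr
          simp only [cv, Nat.add_zero] at hna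
          rw [← hna] at ha2 hb2
          obtain ⟨hab, ha1, hb1⟩ := nrr_inv hyr1
          obtain ⟨haB, hbB⟩ := hab rfl
          obtain ⟨_, ha2', hb2'⟩ := n2r_inv hyr2
          have heq : delFixR c
              (RBTree.node Color.black RBTree.nil yk (RBTree.node Color.red a2 wk2 b2)) k x
              = (RBTree.node c (RBTree.node Color.black RBTree.nil yk a2) wk2
                 (RBTree.node Color.black b2 k x), false) := rfl
          refine fixSpec_false (by rw [heq]) ?_ ?_ ?_ ?_ ?_ <;> rw [heq]
          · simp [inorder]
          · exact nrr_node (by simp [color]) (nrr_node (by simp) trivial ha1)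
              (nrr_node (by simp) hb1 hx1)
          · exact n2r_node (by simp [color]) (n2r_node (by simp [color, haB]) trivial ha2')
              (n2r_node (by simp [hxc]) hb2' hx2)
          · exact bh_node (BH.black hyl ha2) (BH.black hb2 hx)
          · exact Or.inl rfl
        · -- yr = node black a2 wk2 b2, yl = nil : black nephews
          have heq : delFixR c
              (RBTree.node Color.black RBTree.nil yk (RBTree.node Color.black a2 wk2 b2)) k x
              = (RBTree.node Color.black
                  (RBTree.node Color.red RBTree.nil yk (RBTree.node Color.black a2 wk2 b2)) k x,
                 decide (c = Color.black)) := rfl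
          cases c with
          | red =>
            refine fixSpec_false (by rw [heq]; rfl) ?_ ?_ ?_ ?_ ?_ <;> rw [heq]
            · simp [inorder]
            · exact nrr_node (by simp) (nrr_node (by simp [color]) trivial hyr1) hx1
            · exact n2r_node (by simp [hxc]) (n2r_node (by simp [color]) trivial hyr2) hx2
            · simpa using BH.black (BH.red hyl hyr) hx
            · exact Or.inr rfl
          | black =>
            refine fixSpec_true (by rw [heq]; rfl) ?_ ?_ ?_ ?_ ?_ <;> rw [heq]
            · simp [inorder]
            · exact nrr_node (by simp) (nrr_node (by simp [color]) trivial hyr1) hx1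
            · exact n2r_node (by simp [hxc]) (n2r_node (by simp [color]) trivial hyr2) hx2
            · exact BH.black (BH.red hyl hyr) hx
            · rfl
      · -- yl = node red a wk b : red nephew on the left
        obtain ⟨na, ha, hb, hna⟩ := bh_inv hyl
        simp only [cv, Nat.add_zero] at hna
        rw [← hna] at ha hb
        obtain ⟨hab, ha1, hb1⟩ := nrr_inv hyl1
        obtain ⟨haB, hbB⟩ := hab rfl
        obtain ⟨_, ha2', hb2'⟩ := n2r_inv hyl2
        have heq : delFixR c
            (RBTree.node Color.black (RBTree.node Color.red a wk b) yk yr) k x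
            = (RBTree.node c (RBTree.node Color.black a wk b) yk
               (RBTree.node Color.black yr k x), false) := by simp [delFixR]
        refine fixSpec_false (by rw [heq]) ?_ ?_ ?_ ?_ ?_ <;> rw [heq]
        · simp [inorder]
        · exact nrr_node (by simp [color]) (nrr_node (by simp) ha1 hb1)
            (nrr_node (by simp) hyr1 hx1)
        · exact n2r_node (by simp [color]) (n2r_node (by simp [haB]) ha2' hb2')
            (n2r_node (by simp [hxc]) hyr2 hx2)
        · exact bh_node (BH.black ha hb) (BH.black hyr hx)
        · exact Or.inl rfl
      · -- yl = node black a wk b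
        rcases yr with _ | ⟨(_ | _), a2, wk2, b2⟩
        · -- yr = nil : black nephews
          have heq : delFixR c
              (RBTree.node Color.black (RBTree.node Color.black a wk b) yk RBTree.nil) k x
              = (RBTree.node Color.black
                  (RBTree.node Color.red (RBTree.node Color.black a wk b) yk RBTree.nil) k x,
                 decide (c = Color.black)) := rfl
          cases c with
          | red =>
            refine fixSpec_false (by rw [heq]; rfl) ?_ ?_ ?_ ?_ ?_ <;> rw [heq]
            · simp [inorder]
            · exact nrr_node (by simp) (nrr_node (by simp [color]) hyl1 trivial) hx1
            · exact n2r_node (by simp [hxc]) (n2r_node (by simp [color]) hyl2 trivial) hx2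
            · simpa using BH.black (BH.red hyl hyr) hx
            · exact Or.inr rfl
          | black =>
            refine fixSpec_true (by rw [heq]; rfl) ?_ ?_ ?_ ?_ ?_ <;> rw [heq]
            · simp [inorder]
            · exact nrr_node (by simp) (nrr_node (by simp [color]) hyl1 trivial) hx1
            · exact n2r_node (by simp [hxc]) (n2r_node (by simp [color]) hyl2 trivial) hx2
            · exact BH.black (BH.red hyl hyr) hx
            · rfl
        · -- yr = node red a2 wk2 b2 : red nephew on the right
          obtain ⟨na, ha2, hb2, hna⟩ := bh_inv hyr
          simp only [cv, Nat.add_zero] at hna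
          rw [← hna] at ha2 hb2
          obtain ⟨hab, ha1, hb1⟩ := nrr_inv hyr1
          obtain ⟨haB, hbB⟩ := hab rfl
          obtain ⟨_, ha2', hb2'⟩ := n2r_inv hyr2
          have heq : delFixR c
              (RBTree.node Color.black (RBTree.node Color.black a wk b) yk
                (RBTree.node Color.red a2 wk2 b2)) k x
              = (RBTree.node c
                  (RBTree.node Color.black (RBTree.node Color.black a wk b) yk a2) wk2
                  (RBTree.node Color.black b2 k x), false) := rfl
          refine fixSpec_false (by rw [heq]) ?_ ?_ ?_ ?_ ?_ <;> rw [heq]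
          · simp [inorder]
          · exact nrr_node (by simp [color]) (nrr_node (by simp) hyl1 ha1)
              (nrr_node (by simp) hb1 hx1)
          · exact n2r_node (by simp [color]) (n2r_node (by simp [color, haB]) hyl2 ha2')
              (n2r_node (by simp [hxc]) hb2' hx2)
          · exact bh_node (BH.black hyl ha2) (BH.black hb2 hx)
          · exact Or.inl rfl
        · -- both black : black nephews
          have heq : delFixR c
              (RBTree.node Color.black (RBTree.node Color.black a wk b) yk
                (RBTree.node Color.black a2 wk2 b2)) k x
              = (RBTree.node Color.black
                  (RBTree.node Color.red (RBTree.node Color.black a wk b) yk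
                    (RBTree.node Color.black a2 wk2 b2)) k x,
                 decide (c = Color.black)) := rfl
          cases c with
          | red =>
            refine fixSpec_false (by rw [heq]; rfl) ?_ ?_ ?_ ?_ ?_ <;> rw [heq]
            · simp [inorder]
            · exact nrr_node (by simp) (nrr_node (by simp [color]) hyl1 hyr1) hx1
            · exact n2r_node (by simp [hxc]) (n2r_node (by simp [color]) hyl2 hyr2) hx2
            · simpa using BH.black (BH.red hyl hyr) hx
            · exact Or.inr rfl
          | black =>
            refine fixSpec_true (by rw [heq]; rfl) ?_ ?_ ?_ ?_ ?_ <;> rw [heq]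
            · simp [inorder]
            · exact nrr_node (by simp) (nrr_node (by simp [color]) hyl1 hyr1) hx1
            · exact n2r_node (by simp [hxc]) (n2r_node (by simp [color]) hyl2 hyr2) hx2
            · exact BH.black (BH.red hyl hyr) hx
            · rfl

end RBTree

namespace RBTree

variable {α : Type}

/-- Spec for `delMin`. -/
def MinSpec (c0 : Color) (m : ℕ) (res : α × RBTree α × Bool) (io : List α) : Prop :=
  res.1 :: inorder res.2.1 = io ∧ NoRedRed res.2.1 ∧ No2Red res.2.1 ∧
  (if res.2.2 = true then (∃ n, m = n + 1 ∧ BH res.2.1 n) ∧ color res.2.1 = Color.black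
   else BH res.2.1 m ∧ (color res.2.1 = c0 ∨ color res.2.1 = Color.black))

lemma minSpec_false {c0 : Color} {m : ℕ} {res : α × RBTree α × Bool} {io : List α}
    (hf : res.2.2 = false) (hio : res.1 :: inorder res.2.1 = io)
    (h1 : NoRedRed res.2.1) (h2 : No2Red res.2.1) (hb : BH res.2.1 m)
    (hc : color res.2.1 = c0 ∨ color res.2.1 = Color.black) : MinSpec c0 m res io := by
  refine ⟨hio, h1, h2, ?_⟩
  rw [if_neg (by rw [hf]; simp)]
  exact ⟨hb, hc⟩

lemma minSpec_true {c0 : Color} {m : ℕ} {res : α × RBTree α × Bool} {io : List α}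
    (hf : res.2.2 = true) (hio : res.1 :: inorder res.2.1 = io)
    (h1 : NoRedRed res.2.1) (h2 : No2Red res.2.1)
    (hb : ∃ n, m = n + 1 ∧ BH res.2.1 n) (hc : color res.2.1 = Color.black) :
    MinSpec c0 m res io := by
  refine ⟨hio, h1, h2, ?_⟩
  rw [if_pos hf]
  exact ⟨hb, hc⟩

lemma delMin_spec {l : RBTree α} : ∀ {c : Color} {r : RBTree α} {x : α} {n : ℕ},
    BH l n → BH r n → NoRedRed (RBTree.node c l x r) → No2Red (RBTree.node c l x r) →
    MinSpec c (n + cv c) (delMin c l x r) (inorder l ++ x :: inorder r) := by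
  induction l with
  | nil =>
    intro c r x n hl hr h1 h2
    have hn0 : n = 0 := bh_nil_inv hl
    subst hn0
    rcases r with _ | ⟨rc, rl, rx, rr⟩
    · -- leaf
      have heq : delMin c RBTree.nil x (RBTree.nil : RBTree α)
          = (x, RBTree.nil, decide (c = Color.black)) := rfl
      cases c with
      | red =>
        refine minSpec_false (by rw [heq]; rfl) ?_ ?_ ?_ ?_ ?_ <;> rw [heq]
        · simp [inorder]
        · trivial
        · trivial
        · exact BH.nil
        · exact Or.inr rfl
      | black =>
        refine minSpec_true (by rw [heq]; rfl) ?_ ?_ ?_ ?_ ?_ <;> rw [heq]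
        · simp [inorder]
        · trivial
        · trivial
        · exact ⟨0, rfl, BH.nil⟩
        · rfl
    · -- single red child
      have hrc : rc = Color.red := bh_zero_red hr
      subst hrc
      have hcb : c = Color.black := by
        cases c
        · exact absurd ((nrr_inv h1).1 rfl).2 (by simp [color])
        · rfl
      subst hcb
      obtain ⟨nr, hrl, hrr, hnr⟩ := bh_inv hr
      simp only [cv, Nat.add_zero] at hnr
      rw [← hnr] at hrl hrr
      have hr1 := (nrr_inv h1).2.2
      obtain ⟨hrcol, hrl1, hrr1⟩ := nrr_inv hr1
      obtain ⟨hrlb, hrrb⟩ := hrcol rfl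
      obtain ⟨_, hrl2, hrr2⟩ := n2r_inv (n2r_inv h2).2.2
      have heq : delMin Color.black RBTree.nil x (RBTree.node Color.red rl rx rr)
          = (x, RBTree.node Color.black rl rx rr, false) := rfl
      refine minSpec_false (by rw [heq]) ?_ ?_ ?_ ?_ ?_ <;> rw [heq]
      · simp [inorder]
      · exact nrr_node (by simp) hrl1 hrr1
      · exact n2r_node (by simp [hrlb]) hrl2 hrr2
      · exact BH.black hrl hrr
      · exact Or.inr rfl
  | node cl ll lx lr ihl _ =>
    intro c r x n hl hr h1 h2
    obtain ⟨nl, hll, hlr, hnl⟩ := bh_inv hl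
    obtain ⟨hc1, hl1, hr1⟩ := nrr_inv h1
    obtain ⟨hc2, hl2, hr2⟩ := n2r_inv h2
    have IH := ihl hll hlr hl1 hl2
    obtain ⟨io, nrr1, n2r1, hflag⟩ := IH
    cases hp : (delMin cl ll lx lr).2.2 with
    | true =>
      rw [hp, if_pos rfl] at hflag
      obtain ⟨⟨n2, hn2, hbh⟩, hcolB⟩ := hflag
      rw [← hnl, ] at hn2
      have hry : BH r (n2 + 1) := by rw [hn2] at hr; exact hr
      have FIX := delFixL_spec (c := c) (k := x) hbh hcolB nrr1 n2r1 hry hr1 hr2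
        (fun hc => (hc1 hc).2)
      obtain ⟨fio, fnrr, fn2r, fflag⟩ := FIX
      have heq : delMin c (RBTree.node cl ll lx lr) x r
          = ((delMin cl ll lx lr).1, (delFixL c (delMin cl ll lx lr).2.1 x r).1,
             (delFixL c (delMin cl ll lx lr).2.1 x r).2) := by
        simp only [delMin]
        rw [if_pos hp]
      rw [MinSpec, heq]
      refine ⟨?_, fnrr, fn2r, ?_⟩
      · show (delMin cl ll lx lr).1 :: inorder (delFixL c (delMin cl ll lx lr).2.1 x r).1 = _
        rw [fio, ← List.cons_append, io]
        simp [inorder]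
      · cases hq : (delFixL c (delMin cl ll lx lr).2.1 x r).2 with
        | true =>
          rw [hq, if_pos rfl] at fflag
          rw [if_pos rfl]
          obtain ⟨hcb, fbh, fcol⟩ := fflag
          subst hcb
          exact ⟨⟨n2 + 1, by rw [hn2]; simp [cv], fbh⟩, fcol⟩
        | false =>
          rw [hq, if_neg (by simp)] at fflag
          rw [if_neg (by simp)]
          obtain ⟨fbh, fcol⟩ := fflag
          exact ⟨by rw [hn2]; exact fbh, fcol⟩
    | false =>
      rw [hp, if_neg (by simp)] at hflag
      obtain ⟨hbh, hcol⟩ := hflag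
      rw [← hnl] at hbh
      have heq : delMin c (RBTree.node cl ll lx lr) x r
          = ((delMin cl ll lx lr).1,
             RBTree.node c (delMin cl ll lx lr).2.1 x r, false) := by
        simp only [delMin]
        rw [if_neg (by rw [hp]; simp)]
      refine minSpec_false (by rw [heq]) ?_ ?_ ?_ ?_ ?_ <;> rw [heq]
      · show (delMin cl ll lx lr).1 :: inorder (RBTree.node c (delMin cl ll lx lr).2.1 x r) = _
        show (delMin cl ll lx lr).1 ::
          (inorder (delMin cl ll lx lr).2.1 ++ x :: inorder r) = _
        rw [← List.cons_append, io]
        simp [inorder]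
      · refine nrr_node (fun hcred => ⟨?_, (hc1 hcred).2⟩) nrr1 hr1
        rcases hcol with h | h
        · rw [h]; exact ((hc1 hcred).1 : color (RBTree.node cl ll lx lr) = Color.black)
        · exact h
      · refine n2r_node (fun ⟨hpr, hrr⟩ => ?_) n2r1 hr2
        apply hc2
        refine ⟨?_, hrr⟩
        rcases hcol with h | h
        · rw [← h]; exact hpr
        · rw [h] at hpr; exact absurd hpr (by simp)
      · exact bh_node hbh hr
      · exact Or.inl rfl

end RBTree

namespace RBTree

variable {α : Type}

lemma sorted_mid [LinearOrder α] {l r : List α} {x : α}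
    (h : List.Pairwise (· < ·) (l ++ x :: r)) :
    List.Pairwise (· < ·) l ∧ List.Pairwise (· < ·) r ∧
      (∀ a ∈ l, a < x) ∧ ∀ b ∈ r, x < b := by
  rw [List.pairwise_append] at h
  obtain ⟨h1, h2, h3⟩ := h
  rw [List.pairwise_cons] at h2
  exact ⟨h1, h2.2, fun a ha => h3 a ha x (by simp), h2.1⟩

lemma erase_left [DecidableEq α] {a : α} {l₂ : List α} (l₁ : List α) (h : a ∉ l₂) :
    (l₁ ++ l₂).erase a = l₁.erase a ++ l₂ := by
  by_cases h1 : a ∈ l₁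
  · exact List.erase_append_left _ h1
  · rw [List.erase_of_not_mem h1, List.erase_of_not_mem (by simp [h1, h])]

/-- Spec for `delAux`. -/
def DelSpec (c0 : Color) (m : ℕ) (res : RBTree α × Bool) (io : List α) : Prop :=
  inorder res.1 = io ∧ NoRedRed res.1 ∧ No2Red res.1 ∧
  (if res.2 = true then (∃ n, m = n + 1 ∧ BH res.1 n) ∧ color res.1 = Color.black
   else BH res.1 m ∧ (color res.1 = c0 ∨ color res.1 = Color.black))

lemma delSpec_false {c0 : Color} {m : ℕ} {res : RBTree α × Bool} {io : List α}
    (hf : res.2 = false) (hio : inorder res.1 = io)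
    (h1 : NoRedRed res.1) (h2 : No2Red res.1) (hb : BH res.1 m)
    (hc : color res.1 = c0 ∨ color res.1 = Color.black) : DelSpec c0 m res io := by
  refine ⟨hio, h1, h2, ?_⟩
  rw [if_neg (by rw [hf]; simp)]
  exact ⟨hb, hc⟩

lemma delSpec_true {c0 : Color} {m : ℕ} {res : RBTree α × Bool} {io : List α}
    (hf : res.2 = true) (hio : inorder res.1 = io)
    (h1 : NoRedRed res.1) (h2 : No2Red res.1)
    (hb : ∃ n, m = n + 1 ∧ BH res.1 n) (hc : color res.1 = Color.black) :
    DelSpec c0 m res io := by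
  refine ⟨hio, h1, h2, ?_⟩
  rw [if_pos hf]
  exact ⟨hb, hc⟩

/-- Convert a `FixSpec` to a `DelSpec`. -/
lemma fixSpec_toDel {c : Color} {n m : ℕ} {res : RBTree α × Bool} {io io' : List α}
    (h : FixSpec c n res io) (hm : m = n + 1 + cv c) (hio : io = io') :
    DelSpec c m res io' := by
  obtain ⟨h1, h2, h3, h4⟩ := h
  refine ⟨hio ▸ h1, h2, h3, ?_⟩
  cases hq : res.2 with
  | true =>
    rw [if_pos hq] at h4
    rw [if_pos rfl]
    obtain ⟨hcb, hbh, hcol⟩ := h4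
    subst hcb
    exact ⟨⟨n + 1, by rw [hm]; simp [cv], hbh⟩, hcol⟩
  | false =>
    rw [if_neg (by rw [hq]; simp)] at h4
    rw [if_neg (by simp)]
    exact ⟨hm ▸ h4.1, h4.2⟩

lemma delAux_spec [LinearOrder α] {k : α} {t : RBTree α} {m : ℕ}
    (hb : BH t m) (h1 : NoRedRed t) (h2 : No2Red t)
    (hs : List.Pairwise (· < ·) (inorder t)) :
    DelSpec (color t) m (delAux k t) ((inorder t).erase k) := by
  induction t generalizing m with
  | nil =>
    have hm : m = 0 := bh_nil_inv hb
    subst hm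
    exact delSpec_false rfl rfl trivial trivial BH.nil (Or.inr rfl)
  | node c l x r ihl ihr =>
    obtain ⟨nn, hbl, hbr, hm⟩ := bh_inv hb
    obtain ⟨hc1, hl1, hr1⟩ := nrr_inv h1
    obtain ⟨hc2, hl2, hr2⟩ := n2r_inv h2
    have hs' : List.Pairwise (· < ·) (inorder l ++ x :: inorder r) := hs
    obtain ⟨hsl, hsr, hlx, hxr⟩ := sorted_mid hs'
    subst hm
    rcases lt_trichotomy k x with hk | hk | hk
    · -- k < x : go left
      have hknr : k ∉ x :: inorder r := by
        intro hmem
        rcases List.mem_cons.1 hmem with h | h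
        · exact absurd h (ne_of_lt hk)
        · exact lt_irrefl k (hk.trans (hxr k h))
      have hio : (inorder (RBTree.node c l x r)).erase k
          = (inorder l).erase k ++ x :: inorder r := by
        show (inorder l ++ x :: inorder r).erase k = _
        exact erase_left _ hknr
      have IH := ihl hbl hl1 hl2 hsl
      obtain ⟨pio, pnrr, pn2r, pflag⟩ := IH
      have heq : delAux k (RBTree.node c l x r)
          = (if (delAux k l).2 = true then delFixL c (delAux k l).1 x r
             else (RBTree.node c (delAux k l).1 x r, false)) := by
        simp only [delAux]
        rw [if_pos hk]
      cases hp : (delAux k l).2 with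
      | true =>
        rw [hp, if_pos rfl] at pflag heq
        obtain ⟨⟨n2, hn2, hbh⟩, pcolB⟩ := pflag
        have hry : BH r (n2 + 1) := by rw [← hn2]; exact hbr
        have FIX := delFixL_spec (c := c) (k := x) hbh pcolB pnrr pn2r hry hr1 hr2
          (fun hcr => (hc1 hcr).2)
        rw [heq, hio]
        exact fixSpec_toDel FIX (by simp only [color]; omega) (by rw [pio])
      | false =>
        rw [hp, if_neg (by simp)] at pflag heq
        obtain ⟨pbh, pcol⟩ := pflag
        rw [heq, hio]
        refine delSpec_false rfl ?_ ?_ ?_ ?_ ?_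
        · show inorder (delAux k l).1 ++ x :: inorder r = _
          rw [pio]
        · refine nrr_node (fun hcr => ⟨?_, (hc1 hcr).2⟩) pnrr hr1
          rcases pcol with h | h
          · rw [h]; exact (hc1 hcr).1
          · exact h
        · refine n2r_node (fun ⟨hpr, hrr⟩ => hc2 ⟨?_, hrr⟩) pn2r hr2
          rcases pcol with h | h
          · rw [← h]; exact hpr
          · rw [h] at hpr; exact absurd hpr (by simp)
        · exact bh_node pbh hbr
        · exact Or.inl rfl
    · -- k = x : delete here
      subst hk
      have hknl : k ∉ inorder l := fun h => absurd (hlx k h) (lt_irrefl k)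
      have hio : (inorder (RBTree.node c l k r)).erase k = inorder l ++ inorder r := by
        show (inorder l ++ k :: inorder r).erase k = _
        rw [List.erase_append_right _ hknl, List.erase_cons_head]
      rcases l with _ | ⟨lc, ll2, lx2, lr2⟩
      · rcases r with _ | ⟨rc, rl, rx, rr⟩
        · -- leaf
          have hnn : nn = 0 := bh_nil_inv hbl
          subst hnn
          have heq : delAux k (RBTree.node c (RBTree.nil : RBTree α) k RBTree.nil)
              = (RBTree.nil, decide (c = Color.black)) := by
            simp [delAux, setBlack]
          rw [hio]
          cases c with
          | red =>
            refine delSpec_false (by rw [heq]; rfl) ?_ ?_ ?_ ?_ ?_ <;> rw [heq]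
            · simp [inorder]
            · trivial
            · trivial
            · exact BH.nil
            · exact Or.inr rfl
          | black =>
            refine delSpec_true (by rw [heq]; rfl) ?_ ?_ ?_ ?_ ?_ <;> rw [heq]
            · simp [inorder]
            · trivial
            · trivial
            · exact ⟨0, rfl, BH.nil⟩
            · rfl
        · -- only right child
          have hnn : nn = 0 := bh_nil_inv hbl
          subst hnn
          have hrc : rc = Color.red := bh_zero_red hbr
          subst hrc
          have hcb : c = Color.black := by
            cases c
            · exact absurd ((nrr_inv h1).1 rfl).2 (by simp [color])
            · rfl
          subst hcb
          obtain ⟨nr, hrl, hrr, hnr⟩ := bh_inv hbr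
          simp only [cv, Nat.add_zero] at hnr
          rw [← hnr] at hrl hrr
          obtain ⟨hrcol, hrl1, hrr1⟩ := nrr_inv hr1
          obtain ⟨hrlb, hrrb⟩ := hrcol rfl
          obtain ⟨_, hrl2, hrr2⟩ := n2r_inv hr2
          have heq : delAux k (RBTree.node Color.black (RBTree.nil : RBTree α) k
              (RBTree.node Color.red rl rx rr))
              = (RBTree.node Color.black rl rx rr, false) := by
            simp [delAux, setBlack]
          rw [hio]
          refine delSpec_false (by rw [heq]) (by simp [heq, inorder]) ?_ ?_ ?_ ?_ <;> rw [heq]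
          · exact nrr_node (by simp) hrl1 hrr1
          · exact n2r_node (by simp [hrlb]) hrl2 hrr2
          · exact BH.black hrl hrr
          · exact Or.inl rfl
      · rcases r with _ | ⟨rc, rl, rx, rr⟩
        · -- only left child
          have hnn : nn = 0 := bh_nil_inv hbr
          subst hnn
          have hlc : lc = Color.red := bh_zero_red hbl
          subst hlc
          have hcb : c = Color.black := by
            cases c
            · exact absurd ((nrr_inv h1).1 rfl).1 (by simp [color])
            · rfl
          subst hcb
          obtain ⟨nl2, hll, hlr, hnl2⟩ := bh_inv hbl
          simp only [cv, Nat.add_zero] at hnl2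
          rw [← hnl2] at hll hlr
          obtain ⟨hlcol, hll1, hlr1⟩ := nrr_inv hl1
          obtain ⟨hllb, hlrb⟩ := hlcol rfl
          obtain ⟨_, hll2', hlr2'⟩ := n2r_inv hl2
          have heq : delAux k (RBTree.node Color.black
              (RBTree.node Color.red ll2 lx2 lr2) k (RBTree.nil : RBTree α))
              = (RBTree.node Color.black ll2 lx2 lr2, false) := by
            simp [delAux, setBlack]
          rw [hio]
          refine delSpec_false (by rw [heq]) (by simp [heq, inorder]) ?_ ?_ ?_ ?_ <;> rw [heq]
          · exact nrr_node (by simp) hll1 hlr1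
          · exact n2r_node (by simp [hllb]) hll2' hlr2'
          · exact BH.black hll hlr
          · exact Or.inl rfl
        · -- two children : use delMin on the right subtree
          obtain ⟨nr2, hrl, hrr, hnr⟩ := bh_inv hbr
          have MIN := delMin_spec hrl hrr hr1 hr2
          obtain ⟨mio, mnrr, mn2r, mflag⟩ := MIN
          rw [← hnr] at mflag
          have heq : delAux k (RBTree.node c (RBTree.node lc ll2 lx2 lr2) k
              (RBTree.node rc rl rx rr))
              = (if (delMin rc rl rx rr).2.2 = true then
                   delFixR c (RBTree.node lc ll2 lx2 lr2) (delMin rc rl rx rr).1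
                     (delMin rc rl rx rr).2.1
                 else (RBTree.node c (RBTree.node lc ll2 lx2 lr2) (delMin rc rl rx rr).1
                        (delMin rc rl rx rr).2.1, false)) := by
            simp [delAux]
          cases hp : (delMin rc rl rx rr).2.2 with
          | true =>
            rw [hp, if_pos rfl] at mflag heq
            obtain ⟨⟨n2, hn2, mbh⟩, mcolB⟩ := mflag
            have hly : BH (RBTree.node lc ll2 lx2 lr2) (n2 + 1) := by
              rw [← hn2]; exact hbl
            have FIX := delFixR_spec (c := c) (k := (delMin rc rl rx rr).1)
              mbh mcolB mnrr mn2r hly hl1 hl2 (fun hcr => (hc1 hcr).1)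
            rw [heq, hio]
            refine fixSpec_toDel FIX (by simp only [color]; omega) ?_
            show _ ++ (delMin rc rl rx rr).1 :: inorder (delMin rc rl rx rr).2.1 = _
            rw [mio]
            rfl
          | false =>
            rw [hp, if_neg (by simp)] at mflag heq
            obtain ⟨mbh, mcol⟩ := mflag
            rw [heq, hio]
            refine delSpec_false rfl ?_ ?_ ?_ ?_ ?_
            · show inorder (RBTree.node lc ll2 lx2 lr2) ++
                ((delMin rc rl rx rr).1 :: inorder (delMin rc rl rx rr).2.1) = _
              rw [mio]
              rfl
            · refine nrr_node (fun hcr => ⟨(hc1 hcr).1, ?_⟩) hl1 mnrr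
              rcases mcol with h | h
              · rw [h]; exact (hc1 hcr).2
              · exact h
            · refine n2r_node (fun hcontra => hc2 ⟨hcontra.1, ?_⟩) hl2 mn2r
              rcases mcol with h | h
              · rw [show color (RBTree.node rc rl rx rr) = rc from rfl, ← h]
                exact hcontra.2
              · rw [h] at hcontra; exact absurd hcontra.2 (by simp)
            · exact bh_node hbl mbh
            · exact Or.inl rfl
    · -- x < k : go right
      have hknl : k ∉ inorder l := fun h => absurd ((hlx k h).trans hk) (lt_irrefl k)
      have hio : (inorder (RBTree.node c l x r)).erase k
          = inorder l ++ x :: (inorder r).erase k := by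
        show (inorder l ++ x :: inorder r).erase k = _
        rw [List.erase_append_right _ hknl,
          List.erase_cons_tail (by simpa using ne_of_lt hk)]
      have IH := ihr hbr hr1 hr2 hsr
      obtain ⟨pio, pnrr, pn2r, pflag⟩ := IH
      have heq : delAux k (RBTree.node c l x r)
          = (if (delAux k r).2 = true then delFixR c l x (delAux k r).1
             else (RBTree.node c l x (delAux k r).1, false)) := by
        simp only [delAux]
        rw [if_neg (asymm hk), if_pos hk]
      cases hp : (delAux k r).2 with
      | true =>
        rw [hp, if_pos rfl] at pflag heq
        obtain ⟨⟨n2, hn2, hbh⟩, pcolB⟩ := pflag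
        have hly : BH l (n2 + 1) := by rw [← hn2]; exact hbl
        have FIX := delFixR_spec (c := c) (k := x) hbh pcolB pnrr pn2r hly hl1 hl2
          (fun hcr => (hc1 hcr).1)
        rw [heq, hio]
        exact fixSpec_toDel FIX (by simp only [color]; omega) (by rw [pio])
      | false =>
        rw [hp, if_neg (by simp)] at pflag heq
        obtain ⟨pbh, pcol⟩ := pflag
        rw [heq, hio]
        refine delSpec_false rfl ?_ ?_ ?_ ?_ ?_
        · show inorder l ++ x :: inorder (delAux k r).1 = _
          rw [pio]
        · refine nrr_node (fun hcr => ⟨(hc1 hcr).1, ?_⟩) hl1 pnrr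
          rcases pcol with h | h
          · rw [h]; exact (hc1 hcr).2
          · exact h
        · refine n2r_node (fun hcontra => hc2 ⟨hcontra.1, ?_⟩) hl2 pn2r
          rcases pcol with h | h
          · rw [← h]; exact hcontra.2
          · rw [h] at hcontra; exact absurd hcontra.2 (by simp)
        · exact bh_node hbl pbh
        · exact Or.inl rfl

end RBTree

open RBTree

/-- Proposition 2: The parity-seeking deletion algorithm for 2-3
red-black trees terminates (it is a total function) and is correct: for every
2-3 red-black tree `T` and every key `k` occurring in `T`, it produces a valid
2-3 red-black tree whose inorder traversal is the inorder traversal of `T`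
with `k` removed. -/
theorem parity_seeking_delete_correct
    {α : Type} [LinearOrder α] (T : RBTree α) (k : α)
    (h23 : Is23RB T) (hbst : List.Pairwise (· < ·) (inorder T))
    (hk : k ∈ inorder T) :
    Is23RB (delete k T) ∧ inorder (delete k T) = (inorder T).erase k := by
  obtain ⟨⟨hcol, hnrr, n, hbh⟩, hn2r⟩ := h23
  have SPEC := delAux_spec (k := k) hbh hnrr hn2r hbst
  obtain ⟨sio, snrr, sn2r, sflag⟩ := SPEC
  have hcolres : color (delAux k T).1 = Color.black ∧ ∃ m, BH (delAux k T).1 m := by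
    cases hq : (delAux k T).2 with
    | true =>
      rw [hq, if_pos rfl] at sflag
      obtain ⟨⟨n2, _, hbh2⟩, colB⟩ := sflag
      exact ⟨colB, n2, hbh2⟩
    | false =>
      rw [hq, if_neg (by simp)] at sflag
      refine ⟨?_, ⟨n, sflag.1⟩⟩
      rcases sflag.2 with h | h
      · rw [h]; exact hcol
      · exact h
  exact ⟨⟨⟨hcolres.1, snrr, hcolres.2⟩, sn2r⟩, sio⟩
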